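/- arXiv:math/0207240 — 2 statements merged into one kernel-verified Lean document; each statement's English description precedes it below -/
import Mathlib

section
/- Let f be a polynomial in two variables over ℂ, regarded as an element of (ℂ[X])[Y], which is monic of degree n ≥ 1 in Y. For x ∈ ℂ, let f_x ∈ ℂ[Y] denote the one-variable polynomial obtained by evaluating all coefficients of f at x. Let N = {x ∈ ℂ : f_x has fewer than n distinct roots in ℂ}. Let C = {(x, y) ∈ ℂ × ℂ : x ∉ N and f_x(y) = 0}. Then the first-coordinate projection π : C → ℂ ∖ N, π(x, y) = x, is a covering map, and every fiber π⁻¹(x) has exactly n elements. -/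
open Polynomial


open Metric

noncomputable section Stmt7Aux


def Q2 (f : Polynomial (Polynomial ℂ)) (p : ℂ × ℂ) : ℂ :=
  (f.map (evalRingHom p.1)).eval p.2

lemma contDiff_polyeval (p : Polynomial ℂ) : ContDiff ℂ ⊤ (fun x : ℂ => p.eval x) := by
  induction p using Polynomial.induction_on' with
  | add p q hp hq => simpa [eval_add] using hp.add hq
  | monomial k a => simpa [eval_monomial] using contDiff_const.mul (contDiff_id.pow k)

lemma contDiff_Q2 (f : Polynomial (Polynomial ℂ)) : ContDiff ℂ ⊤ (Q2 f) := by
  have hQ : Q2 f = fun p : ℂ × ℂ =>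
      ∑ i ∈ Finset.range (f.natDegree + 1), (f.coeff i).eval p.1 * p.2 ^ i := by
    funext p
    rw [Q2, eval_eq_sum_range' (lt_of_le_of_lt
      (natDegree_map_le (p := f) (f := evalRingHom p.1)) (Nat.lt_succ_self _))]
    simp [coeff_map]
  rw [hQ]
  exact ContDiff.sum fun i _ =>
    ((contDiff_polyeval (f.coeff i)).comp contDiff_fst).mul (contDiff_snd.pow i)

/-- Local continuous root functions at a simple root, via the inverse function theorem. -/
lemma exists_local_root (f : Polynomial (Polynomial ℂ)) (a b : ℂ)
    (hroot : (f.map (evalRingHom a)).eval b = 0)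
    (hd : ((f.map (evalRingHom a)).derivative).eval b ≠ 0) :
    ∃ (U : Set ℂ) (g : ℂ → ℂ), IsOpen U ∧ a ∈ U ∧ ContinuousOn g U ∧ g a = b ∧
      ∀ x ∈ U, (f.map (evalRingHom x)).eval (g x) = 0 := by
  -- strict differentiability of Q2
  have hQs : HasStrictFDerivAt (Q2 f) (fderiv ℂ (Q2 f) (a, b)) (a, b) :=
    ((contDiff_Q2 f).contDiffAt).hasStrictFDerivAt (by simp)
  set L : (ℂ × ℂ) →L[ℂ] ℂ := fderiv ℂ (Q2 f) (a, b) with hL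
  -- partial derivative in the second variable
  have hy : HasDerivAt (fun v => Q2 f (a, v)) (L ((0 : ℂ), (1 : ℂ))) b :=
    hQs.hasFDerivAt.comp_hasDerivAt b ((hasDerivAt_const b a).prodMk (hasDerivAt_id b))
  have hy' : HasDerivAt (fun v => Q2 f (a, v))
      (((f.map (evalRingHom a)).derivative).eval b) b := by
    simp only [Q2]
    exact Polynomial.hasDerivAt _ b
  have hd01 : L ((0 : ℂ), (1 : ℂ)) = ((f.map (evalRingHom a)).derivative).eval b :=
    hy.unique hy'
  set c : ℂ := L ((1 : ℂ), (0 : ℂ)) with hc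
  set d : ℂ := ((f.map (evalRingHom a)).derivative).eval b with hdd
  have hLapp : ∀ p : ℂ × ℂ, L p = c * p.1 + d * p.2 := by
    intro p
    have hp : p = p.1 • ((1 : ℂ), (0 : ℂ)) + p.2 • ((0 : ℂ), (1 : ℂ)) := by
      ext <;> simp
    rw [hp, map_add, map_smul, map_smul, hd01]
    simp [smul_eq_mul, mul_comm, hc]
  -- the invertible derivative of G = (fst, Q2 f)
  have hd0 : d ≠ 0 := hd
  let E : (ℂ × ℂ) ≃ₗ[ℂ] (ℂ × ℂ) :=
    { toFun := fun p => (p.1, c * p.1 + d * p.2)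
      invFun := fun q => (q.1, d⁻¹ * (q.2 - c * q.1))
      map_add' := by intro p q; ext <;> simp <;> ring
      map_smul' := by intro m p; ext <;> simp <;> ring
      left_inv := by intro p; ext; · rfl
                     · field_simp; ring
      right_inv := by intro q; ext; · rfl
                      · field_simp; ring }
  let E' : (ℂ × ℂ) ≃L[ℂ] (ℂ × ℂ) := E.toContinuousLinearEquiv
  set G : ℂ × ℂ → ℂ × ℂ := fun p => (p.1, Q2 f p) with hG
  have hGs : HasStrictFDerivAt G (E' : (ℂ × ℂ) →L[ℂ] (ℂ × ℂ)) (a, b) := by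
    have h1 : HasStrictFDerivAt G ((ContinuousLinearMap.fst ℂ ℂ ℂ).prod L) (a, b) := by
      rw [hG]
      exact ((ContinuousLinearMap.fst ℂ ℂ ℂ).hasStrictFDerivAt (x := (a, b))).prodMk hQs
    have : (E' : (ℂ × ℂ) →L[ℂ] (ℂ × ℂ)) = (ContinuousLinearMap.fst ℂ ℂ ℂ).prod L := by
      apply ContinuousLinearMap.ext
      intro p
      ext
      · rfl
      · exact (hLapp p).symm
    rw [this]
    exact h1
  set φ := hGs.toOpenPartialHomeomorph G with hφ
  have hφcoe : ⇑φ = G := hGs.toOpenPartialHomeomorph_coe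
  have hmem : (a, b) ∈ φ.source := hGs.mem_toOpenPartialHomeomorph_source
  have hGab : G (a, b) = (a, 0) := by simp [hG, Q2, hroot]
  have htgt : (a, (0 : ℂ)) ∈ φ.target := by
    have := φ.map_source hmem
    rwa [hφcoe, hGab] at this
  refine ⟨{x | (x, (0 : ℂ)) ∈ φ.target}, fun x => (φ.symm (x, 0)).2, ?_, htgt, ?_, ?_, ?_⟩
  · exact φ.open_target.preimage (continuous_id.prodMk continuous_const)
  · exact continuous_snd.comp_continuousOn
      (φ.continuousOn_symm.comp ((continuous_id.prodMk continuous_const).continuousOn)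
        (fun x hx => hx))
  · have : φ.symm (a, 0) = (a, b) := by
      rw [← hGab, ← hφcoe]
      exact φ.left_inv hmem
    show (φ.symm (a, 0)).2 = b
    rw [this]
  · intro x hx
    have h1 : φ (φ.symm (x, 0)) = (x, 0) := φ.right_inv hx
    rw [hφcoe] at h1
    have h2 : (φ.symm (x, 0)).1 = x := congrArg Prod.fst h1
    have h3 : Q2 f (φ.symm (x, 0)) = 0 := congrArg Prod.snd h1
    have h4 : (x, (φ.symm (x, 0)).2) = φ.symm (x, 0) := Prod.ext h2.symm rfl
    show (f.map (evalRingHom x)).eval ((φ.symm (x, 0)).2) = 0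
    have h5 : Q2 f (x, (φ.symm (x, 0)).2) = 0 := by rw [h4]; exact h3
    exact h5


lemma roots_card_eq (f : Polynomial (Polynomial ℂ)) (n : ℕ) (hmonic : f.Monic)
    (hdeg : f.natDegree = n) (x : ℂ) :
    Multiset.card (f.map (evalRingHom x)).roots = n := by
  have hqd : (f.map (evalRingHom x)).natDegree = n := by
    rw [hmonic.natDegree_map, hdeg]
  rw [← hqd]
  exact (splits_iff_card_roots.mp (IsAlgClosed.splits _))

lemma local_structure (f : Polynomial (Polynomial ℂ)) (n : ℕ) (hn : 1 ≤ n)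
    (hmonic : f.Monic) (hdeg : f.natDegree = n) (x₀ : ℂ)
    (hx₀ : n ≤ (f.map (evalRingHom x₀)).roots.toFinset.card) :
    ∃ (U : Set ℂ) (y : Fin n → ℂ) (g : Fin n → ℂ → ℂ) (ε : ℝ), 0 < ε ∧ IsOpen U ∧ x₀ ∈ U ∧
      (∀ i j : Fin n, i ≠ j → Disjoint (ball (y i) ε) (ball (y j) ε)) ∧
      (∀ i, ContinuousOn (g i) U) ∧
      (∀ i, ∀ x ∈ U, g i x ∈ ball (y i) ε) ∧
      (∀ i, ∀ x ∈ U, (f.map (evalRingHom x)).eval (g i x) = 0) ∧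
      (∀ x ∈ U, ∀ z : ℂ, (f.map (evalRingHom x)).eval z = 0 → ∃ i, z = g i x) ∧
      (∀ x ∈ U, n ≤ (f.map (evalRingHom x)).roots.toFinset.card) := by
  classical
  set q : ℂ → Polynomial ℂ := fun x => f.map (evalRingHom x) with hq
  have hq0 : ∀ x, q x ≠ 0 := fun x => (hmonic.map _).ne_zero
  have hcard : ∀ x, Multiset.card (q x).roots = n := fun x => roots_card_eq f n hmonic hdeg x
  have hle : ∀ x, (q x).roots.toFinset.card ≤ n := fun x =>
    (Multiset.toFinset_card_le _).trans (hcard x).le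
  have hs : (q x₀).roots.toFinset.card = n := le_antisymm (hle x₀) hx₀
  -- enumerate the roots
  let e := Finset.equivFinOfCardEq hs
  set y : Fin n → ℂ := fun i => (e.symm i : ℂ) with hy
  have hyinj : Function.Injective y := fun i j hij => by
    have := Subtype.ext hij
    simpa using e.symm.injective this
  have hymem : ∀ i, y i ∈ (q x₀).roots.toFinset := fun i => (e.symm i).2
  have hyroot : ∀ i, (q x₀).eval (y i) = 0 := by
    intro i
    have := hymem i
    rw [Multiset.mem_toFinset, mem_roots (hq0 x₀)] at this
    exact this
  -- roots are simple
  have hnodup : (q x₀).roots.Nodup := by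
    rw [← Multiset.toFinset_card_eq_card_iff_nodup, hs, hcard]
  have hsep : (q x₀).Separable :=
    (nodup_roots_iff_of_splits (hq0 x₀) (IsAlgClosed.splits _)).mp hnodup
  have hder : ∀ i, ((q x₀).derivative).eval (y i) ≠ 0 := by
    intro i
    have h1 : (q x₀).eval₂ (RingHom.id ℂ) (y i) = 0 := hyroot i
    exact hsep.eval₂_derivative_ne_zero (RingHom.id ℂ) h1
  -- local root functions
  have hloc : ∀ i : Fin n, ∃ (U : Set ℂ) (g : ℂ → ℂ), IsOpen U ∧ x₀ ∈ U ∧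
      ContinuousOn g U ∧ g x₀ = y i ∧ ∀ x ∈ U, (q x).eval (g x) = 0 := fun i =>
    exists_local_root f x₀ (y i) (hyroot i) (hder i)
  choose U g hUopen hx₀U hgcont hgx₀ hgroot using hloc
  -- a separating radius
  have hsep_eps : ∃ ε : ℝ, 0 < ε ∧ ∀ i j : Fin n, i ≠ j → ε * 2 ≤ dist (y i) (y j) := by
    by_cases hsn : ((Finset.univ : Finset (Fin n)).offDiag).Nonempty
    · set s := (Finset.univ.offDiag).image (fun p : Fin n × Fin n => dist (y p.1) (y p.2))
      have hsne : s.Nonempty := hsn.image _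
      refine ⟨s.min' hsne / 2, ?_, ?_⟩
      · have : ∀ r ∈ s, 0 < r := by
          intro r hr
          simp only [s, Finset.mem_image] at hr
          obtain ⟨p, hp, rfl⟩ := hr
          rw [Finset.mem_offDiag] at hp
          exact dist_pos.mpr fun h => hp.2.2 (hyinj h)
        have := this _ (s.min'_mem hsne)
        linarith
      · intro i j hij
        have hmem : dist (y i) (y j) ∈ s := by
          simp only [s, Finset.mem_image]
          exact ⟨(i, j), by simp [Finset.mem_offDiag, hij], rfl⟩
        have := s.min'_le _ hmem
        linarith
    · refine ⟨1, one_pos, fun i j hij => absurd ?_ hsn⟩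
      exact ⟨(i, j), by simp [Finset.mem_offDiag, hij]⟩
  obtain ⟨ε, hε, hεsep⟩ := hsep_eps
  have hdisj : ∀ i j : Fin n, i ≠ j → Disjoint (ball (y i) ε) (ball (y j) ε) := by
    intro i j hij
    apply ball_disjoint_ball
    calc ε + ε = ε * 2 := by ring
    _ ≤ dist (y i) (y j) := hεsep i j hij
  -- shrink
  set V : Fin n → Set ℂ := fun i => U i ∩ g i ⁻¹' ball (y i) ε with hV
  have hVopen : ∀ i, IsOpen (V i) :=
    fun i => (hgcont i).isOpen_inter_preimage (hUopen i) isOpen_ball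
  set W : Set ℂ := ⋂ i, V i with hW
  have hWopen : IsOpen W := isOpen_iInter_of_finite hVopen
  have hx₀W : x₀ ∈ W := Set.mem_iInter.mpr fun i =>
    ⟨hx₀U i, by simp [hgx₀ i, mem_ball_self hε]⟩
  have hWU : ∀ i, ∀ x ∈ W, x ∈ U i := fun i x hx => (Set.mem_iInter.mp hx i).1
  have hWball : ∀ i, ∀ x ∈ W, g i x ∈ ball (y i) ε := fun i x hx =>
    (Set.mem_iInter.mp hx i).2
  have hWroot : ∀ i, ∀ x ∈ W, (q x).eval (g i x) = 0 := fun i x hx =>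
    hgroot i x (hWU i x hx)
  -- distinctness and exhaustion of roots over W
  have hginj : ∀ x ∈ W, Function.Injective fun i => g i x := by
    intro x hx i j hij
    by_contra hne
    exact (hdisj i j hne).ne_of_mem (hWball i x hx) (hWball j x hx) hij
  have himg : ∀ x ∈ W, (Finset.univ.image fun i => g i x) = (q x).roots.toFinset := by
    intro x hx
    apply Finset.eq_of_subset_of_card_le
    · intro z hz
      simp only [Finset.mem_image, Finset.mem_univ, true_and] at hz
      obtain ⟨i, rfl⟩ := hz
      rw [Multiset.mem_toFinset, mem_roots (hq0 x)]
      exact hWroot i x hx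
    · rw [Finset.card_image_of_injective _ (hginj x hx), Finset.card_univ, Fintype.card_fin]
      exact hle x
  refine ⟨W, y, g, ε, hε, hWopen, hx₀W, hdisj, ?_, hWball, hWroot, ?_, ?_⟩
  · exact fun i => (hgcont i).mono fun x hx => hWU i x hx
  · intro x hx z hz
    have : z ∈ (q x).roots.toFinset := by
      rw [Multiset.mem_toFinset, mem_roots (hq0 x)]
      exact hz
    rw [← himg x hx] at this
    simp only [Finset.mem_image, Finset.mem_univ, true_and] at this
    obtain ⟨i, hi⟩ := this
    exact ⟨i, hi.symm⟩
  · intro x hx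
    rw [← himg x hx, Finset.card_image_of_injective _ (hginj x hx), Finset.card_univ,
      Fintype.card_fin]

end Stmt7Aux


/-- For `f ∈ (ℂ[X])[Y]` monic of degree `n ≥ 1` in `Y`, with
`N = {x : the specialization f_x has fewer than n distinct roots}` and
`C = {(x,y) : x ∉ N, f_x(y) = 0}`, the first-coordinate projection `C → ℂ ∖ N` is a
covering map all of whose fibers have exactly `n` elements. -/
theorem stmt7 (f : Polynomial (Polynomial ℂ)) (n : ℕ) (hn : 1 ≤ n)
    (hmonic : f.Monic) (hdeg : f.natDegree = n)
    (N : Set ℂ)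
    (hN : N = {x : ℂ | ((f.map (evalRingHom x)).roots.toFinset.card < n)})
    (C : Set (ℂ × ℂ))
    (hC : C = {p : ℂ × ℂ | p.1 ∉ N ∧ (f.map (evalRingHom p.1)).eval p.2 = 0})
    (pr : ↥C → ↥(Nᶜ)) (hpr : ∀ p : ↥C, (pr p : ℂ) = (p : ℂ × ℂ).1) :
    IsCoveringMap pr ∧ ∀ x : ↥(Nᶜ), (pr ⁻¹' {x}).ncard = n := by
  classical
  have hmemN : ∀ x : ℂ, x ∈ N ↔ (f.map (evalRingHom x)).roots.toFinset.card < n := by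
    intro x; rw [hN]; exact Iff.rfl
  have hmemC : ∀ p : ℂ × ℂ,
      p ∈ C ↔ (p.1 ∉ N ∧ (f.map (evalRingHom p.1)).eval p.2 = 0) := by
    intro p; rw [hC]; exact Iff.rfl
  have hq0 : ∀ x : ℂ, f.map (evalRingHom x) ≠ 0 := fun x => (hmonic.map _).ne_zero
  have hle : ∀ x : ℂ, (f.map (evalRingHom x)).roots.toFinset.card ≤ n := fun x =>
    (Multiset.toFinset_card_le _).trans (roots_card_eq f n hmonic hdeg x).le
  have hNle : ∀ x : ℂ, x ∉ N → n ≤ (f.map (evalRingHom x)).roots.toFinset.card := by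
    intro x hx
    exact not_lt.mp (fun hlt => hx ((hmemN x).mpr hlt))
  have hNge : ∀ x : ℂ, n ≤ (f.map (evalRingHom x)).roots.toFinset.card → x ∉ N := by
    intro x hx hmem
    exact absurd ((hmemN x).mp hmem) (not_lt.mpr hx)
  have hroot : ∀ p : ↥C, (f.map (evalRingHom (p : ℂ × ℂ).1)).eval (p : ℂ × ℂ).2 = 0 :=
    fun p => ((hmemC _).mp p.2).2
  have hprc : Continuous pr := by
    rw [Topology.IsInducing.subtypeVal.continuous_iff]
    have : (Subtype.val ∘ pr) = fun p : ↥C => ((p : ℂ × ℂ)).1 := funext hpr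
    rw [this]
    exact continuous_fst.comp continuous_subtype_val
  -- fiber cardinality
  have hfiber : ∀ x : ↥(Nᶜ), (pr ⁻¹' {x}).ncard = n := by
    intro x
    have hxcard : (f.map (evalRingHom (x : ℂ))).roots.toFinset.card = n :=
      le_antisymm (hle _) (hNle _ x.2)
    have hinj : Set.InjOn (fun p : ↥C => (p : ℂ × ℂ).2) (pr ⁻¹' {x}) := by
      intro p hp r hr h2
      have hp1 : (p : ℂ × ℂ).1 = (x : ℂ) := by
        rw [← hpr p]; exact congrArg Subtype.val hp
      have hr1 : (r : ℂ × ℂ).1 = (x : ℂ) := by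
        rw [← hpr r]; exact congrArg Subtype.val hr
      exact Subtype.ext (Prod.ext (hp1.trans hr1.symm) h2)
    have himg : (fun p : ↥C => (p : ℂ × ℂ).2) '' (pr ⁻¹' {x})
        = ↑((f.map (evalRingHom (x : ℂ))).roots.toFinset) := by
      ext z
      simp only [Set.mem_image, Finset.coe_sort_coe, Finset.mem_coe,
        Multiset.mem_toFinset, mem_roots (hq0 (x : ℂ))]
      constructor
      · rintro ⟨p, hp, rfl⟩
        have hp1 : (p : ℂ × ℂ).1 = (x : ℂ) := by
          rw [← hpr p]; exact congrArg Subtype.val hp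
        have := hroot p
        rwa [hp1] at this
      · intro hz
        refine ⟨⟨((x : ℂ), z), (hmemC _).mpr ⟨x.2, hz⟩⟩, ?_, rfl⟩
        exact Subtype.ext (hpr _)
    rw [← Set.ncard_image_of_injOn hinj, himg, Set.ncard_coe_finset, hxcard]
  -- trivializations
  have htriv : ∀ x₀s : ↥(Nᶜ), ∃ t : Bundle.Trivialization (Fin n) pr, x₀s ∈ t.baseSet := by
    intro x₀s
    obtain ⟨U, y, g, ε, hε, hUopen, hx₀U, hdisj, hgcont, hgball, hgroot, hexh, hcardge⟩ :=
      local_structure f n hn hmonic hdeg (x₀s : ℂ) (hNle _ x₀s.2)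
    have hUN : ∀ x ∈ U, x ∉ N := fun x hx => hNge x (hcardge x hx)
    set base : Set ↥(Nᶜ) := Subtype.val ⁻¹' U with hbase
    have hbase_open : IsOpen base := hUopen.preimage continuous_subtype_val
    set idx : ↥C → Fin n := fun p =>
      if h : ∃ i, ((p : ℂ × ℂ)).2 ∈ ball (y i) ε then h.choose else ⟨0, hn⟩ with hidxdef
    have hidx : ∀ (p : ↥C) (i : Fin n), (p : ℂ × ℂ).2 ∈ ball (y i) ε → idx p = i := by
      intro p i hi
      have hex : ∃ j, ((p : ℂ × ℂ)).2 ∈ ball (y j) ε := ⟨i, hi⟩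
      rw [hidxdef]
      dsimp only
      rw [dif_pos hex]
      by_contra hne
      exact absurd rfl ((hdisj _ i hne).ne_of_mem hex.choose_spec hi)
    have hp₀mem : ((x₀s : ℂ), g ⟨0, hn⟩ (x₀s : ℂ)) ∈ C :=
      (hmemC _).mpr ⟨hUN _ hx₀U, hgroot ⟨0, hn⟩ _ hx₀U⟩
    set ivf : ↥(Nᶜ) × Fin n → ↥C := fun z =>
      if h : (z.1 : ℂ) ∈ U then
        ⟨((z.1 : ℂ), g z.2 (z.1 : ℂ)), (hmemC _).mpr ⟨hUN _ h, hgroot z.2 _ h⟩⟩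
      else ⟨((x₀s : ℂ), g ⟨0, hn⟩ (x₀s : ℂ)), hp₀mem⟩ with hivfdef
    have hivf_pos : ∀ z : ↥(Nᶜ) × Fin n, (z.1 : ℂ) ∈ U →
        (ivf z : ℂ × ℂ) = ((z.1 : ℂ), g z.2 (z.1 : ℂ)) := by
      intro z h
      rw [hivfdef]
      dsimp only
      rw [dif_pos h]
    refine ⟨⟨⟨⟨⟨fun p => (pr p, idx p), ivf, pr ⁻¹' base, base ×ˢ Set.univ,
      ?_, ?_, ?_, ?_⟩, ?_, ?_⟩, ?_, ?_⟩, base, hbase_open, rfl, rfl, fun p _ => rfl⟩, hx₀U⟩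
    · -- map_source'
      exact fun p hp => ⟨hp, Set.mem_univ _⟩
    · -- map_target'
      intro z hz
      have h1 : (z.1 : ℂ) ∈ U := hz.1
      show pr (ivf z) ∈ base
      show (pr (ivf z) : ℂ) ∈ U
      rw [hpr, hivf_pos z h1]
      exact h1
    · -- left_inv'
      intro p hp
      have hpU : ((p : ℂ × ℂ)).1 ∈ U := by rw [← hpr p]; exact hp
      obtain ⟨j, hj⟩ := hexh _ hpU _ (hroot p)
      have hball : ((p : ℂ × ℂ)).2 ∈ ball (y j) ε := by
        rw [hj]; exact hgball j _ hpU
      have hidxp : idx p = j := hidx p j hball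
      apply Subtype.ext
      have hprU : ((pr p : ℂ)) ∈ U := by rw [hpr p]; exact hpU
      rw [hivf_pos (pr p, idx p) hprU]
      refine Prod.ext (hpr p) ?_
      show g (idx p) ((pr p : ℂ)) = ((p : ℂ × ℂ)).2
      rw [hidxp, hpr p]
      exact hj.symm
    · -- right_inv'
      intro z hz
      have h1 : (z.1 : ℂ) ∈ U := hz.1
      have hval := hivf_pos z h1
      refine Prod.ext ?_ ?_
      · exact Subtype.ext (by rw [hpr (ivf z), hval])
      · show idx (ivf z) = z.2
        apply hidx
        rw [hval]
        exact hgball z.2 _ h1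
    rotate_left 2
    · -- open_source
      exact (hbase_open).preimage hprc
    · -- open_target
      exact hbase_open.prod isOpen_univ
    · -- continuousOn_toFun
      apply (hprc.continuousOn).prodMk
      intro p hp
      apply ContinuousAt.continuousWithinAt
      have hpU : ((p : ℂ × ℂ)).1 ∈ U := by rw [← hpr p]; exact hp
      obtain ⟨j, hj⟩ := hexh _ hpU _ (hroot p)
      have hball : ((p : ℂ × ℂ)).2 ∈ ball (y j) ε := by
        rw [hj]; exact hgball j _ hpU
      have hWo : IsOpen {r : ↥C | ((r : ℂ × ℂ)).2 ∈ ball (y j) ε} :=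
        isOpen_ball.preimage (continuous_snd.comp continuous_subtype_val)
      have hev : idx =ᶠ[nhds p] fun _ => j :=
        Filter.eventuallyEq_of_mem (hWo.mem_nhds hball) (fun r hr => hidx r j hr)
      exact (continuousAt_congr hev).mpr continuousAt_const
    · -- continuousOn_invFun
      rw [Topology.IsInducing.subtypeVal.continuousOn_iff]
      have hcg : ContinuousOn (fun z : ↥(Nᶜ) × Fin n => (((z.1 : ℂ)), g z.2 ((z.1 : ℂ))))
          (base ×ˢ Set.univ) := by
        intro z hz
        have hz1 : (z.1 : ℂ) ∈ U := hz.1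
        have hset : (base ×ˢ Set.univ) ∩ {w : ↥(Nᶜ) × Fin n | w.2 = z.2} ∈
            nhdsWithin z (base ×ˢ Set.univ) :=
          Filter.inter_mem self_mem_nhdsWithin
            (mem_nhdsWithin_of_mem_nhds
              (((isOpen_discrete {z.2}).preimage continuous_snd).mem_nhds rfl))
        refine ContinuousWithinAt.mono_of_mem_nhdsWithin ?_ hset
        refine ContinuousWithinAt.prodMk
          ((continuous_subtype_val.comp continuous_fst).continuousWithinAt) ?_
        have hcw : ContinuousWithinAt (fun w : ↥(Nᶜ) × Fin n => g z.2 ((w.1 : ℂ)))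
            ((base ×ˢ Set.univ) ∩ {w : ↥(Nᶜ) × Fin n | w.2 = z.2}) z :=
          ContinuousWithinAt.comp ((hgcont z.2) _ hz1)
            ((continuous_subtype_val.comp continuous_fst).continuousWithinAt)
            (fun w hw => hw.1.1)
        exact hcw.congr (fun w hw => congrArg (fun i => g i ((w.1 : ℂ))) hw.2) rfl
      refine hcg.congr ?_
      intro z hz
      show (Subtype.val ∘ ivf) z = _
      simp only [Function.comp_apply]
      exact hivf_pos z hz.1
  choose T hT using htriv
  exact ⟨IsCoveringMap.mk pr (fun _ => Fin n) T hT, hfiber⟩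
end

section
/- Let f be a polynomial in two variables over ℂ, regarded as an element of (ℂ[X])[Y], which is monic of degree n ≥ 1 in Y. For x ∈ ℂ, let f_x ∈ ℂ[Y] denote the one-variable polynomial obtained by evaluating all coefficients of f at x, and let N = {x ∈ ℂ : f_x has fewer than n distinct roots in ℂ}. Let h : [0,1] → ℂ ∖ N be a continuous path. Then there exist continuous functions y₁, …, y_n : [0,1] → ℂ such that for every t ∈ [0,1]: f_{h(t)}(y_i(t)) = 0 for each i, and y_i(t) ≠ y_j(t) whenever i ≠ j; in particular, for every t, {y₁(t), …, y_n(t)} is exactly the set of roots of f_{h(t)}. -/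
open Polynomial

namespace Stmt9

noncomputable def P (f : Polynomial (Polynomial ℂ)) (x : ℂ) : Polynomial ℂ := f.map (evalRingHom x)

variable {f : Polynomial (Polynomial ℂ)} {n : ℕ}

noncomputable def Complex.abs : AbsoluteValue ℂ ℝ where
  toFun := norm
  map_mul' := norm_mul
  nonneg' := norm_nonneg
  eq_zero' := fun _ => norm_eq_zero
  add_le' := norm_add_le

lemma Complex.continuous_abs : Continuous Complex.abs := continuous_norm

lemma Complex.dist_eq (z w : ℂ) : dist z w = Complex.abs (z - w) := dist_eq_norm _ _

lemma P_monic (hm : f.Monic) (x : ℂ) : (P f x).Monic := hm.map _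

lemma P_natDegree (hm : f.Monic) (hdeg : f.natDegree = n) (x : ℂ) : (P f x).natDegree = n := by
  rw [P, hm.natDegree_map, hdeg]

lemma P_ne_zero (hm : f.Monic) (x : ℂ) : P f x ≠ 0 := (P_monic hm x).ne_zero

lemma P_roots_card (hm : f.Monic) (hdeg : f.natDegree = n) (x : ℂ) :
    Multiset.card (P f x).roots = n := by
  rw [splits_iff_card_roots.mp (IsAlgClosed.splits _), P_natDegree hm hdeg]

lemma P_coeff (f : Polynomial (Polynomial ℂ)) (x : ℂ) (k : ℕ) :
    (P f x).coeff k = (f.coeff k).eval x := coeff_map _ _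

lemma P_eval (hm : f.Monic) (hdeg : f.natDegree = n) (x z : ℂ) :
    (P f x).eval z = ∑ k ∈ Finset.range (n+1), (f.coeff k).eval x * z ^ k := by
  rw [eval_eq_sum_range, P_natDegree hm hdeg]
  exact Finset.sum_congr rfl fun k _ => by rw [P_coeff]

lemma continuous_P_eval (hm : f.Monic) (hdeg : f.natDegree = n) (z : ℂ) :
    Continuous fun x => (P f x).eval z := by
  simp only [P_eval hm hdeg]
  exact continuous_finset_sum _ fun k _ =>
    ((f.coeff k).continuous_aeval).mul continuous_const

lemma mem_P_roots (hm : f.Monic) {x z : ℂ} : z ∈ (P f x).roots ↔ (P f x).eval z = 0 := by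
  rw [mem_roots (P_ne_zero hm x), IsRoot.def]

lemma norm_P_eval (hm : f.Monic) (x z : ℂ) :
    Complex.abs ((P f x).eval z) = ((P f x).roots.map fun a => Complex.abs (z - a)).prod := by
  conv_lhs => rw [(IsAlgClosed.splits _).eq_prod_roots_of_monic (P_monic hm x)]
  rw [eval_multiset_prod, Multiset.map_map, map_multiset_prod, Multiset.map_map]
  congr 1; ext a; simp

lemma pow_card_le_prod'' (m : Multiset ℝ) {ε : ℝ} (hε : 0 ≤ ε) (h : ∀ a ∈ m, ε ≤ a) :
    ε ^ Multiset.card m ≤ m.prod := by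
  induction m using Multiset.induction with
  | empty => simp
  | cons a s ih =>
    simp only [Multiset.card_cons, Multiset.prod_cons, pow_succ']
    exact mul_le_mul (h a (by simp)) (ih fun b hb => h b (by simp [hb]))
      (pow_nonneg hε _) (hε.trans (h a (by simp)))

lemma P_eval_lower (hm : f.Monic) (hdeg : f.natDegree = n) {x z : ℂ} {ε : ℝ} (hε : 0 < ε)
    (h : ∀ a ∈ (P f x).roots, ε ≤ Complex.abs (z - a)) :
    ε ^ n ≤ Complex.abs ((P f x).eval z) := by
  rw [norm_P_eval hm]
  have hcard : Multiset.card ((P f x).roots.map fun a => Complex.abs (z - a)) = n := by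
    rw [Multiset.card_map, P_roots_card hm hdeg]
  rw [← hcard]
  refine pow_card_le_prod'' _ hε.le fun b hb => ?_
  obtain ⟨a, ha, rfl⟩ := Multiset.mem_map.mp hb
  exact h a ha

lemma root_bound' (p : Polynomial ℂ) (hp : p.Monic) (z : ℂ) (hz : p.eval z = 0) :
    Complex.abs z ≤ max 1 (∑ k ∈ Finset.range p.natDegree, Complex.abs (p.coeff k)) := by
  by_cases h1 : Complex.abs z ≤ 1
  · exact h1.trans (le_max_left _ _)
  push_neg at h1
  refine le_trans ?_ (le_max_right _ _)
  set m := p.natDegree with hn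
  have hev : (0:ℂ) = z ^ m + ∑ k ∈ Finset.range m, p.coeff k * z ^ k := by
    rw [← hz, eval_eq_sum_range, Finset.sum_range_succ, hp.coeff_natDegree, one_mul, add_comm]
  have hzn : z ^ m = -∑ k ∈ Finset.range m, p.coeff k * z ^ k :=
    eq_neg_of_add_eq_zero_left hev.symm
  have key : Complex.abs z ^ m ≤ (∑ k ∈ Finset.range m, Complex.abs (p.coeff k)) * Complex.abs z ^ (m - 1) := by
    calc Complex.abs z ^ m = Complex.abs (z ^ m) := by rw [map_pow]
      _ = Complex.abs (∑ k ∈ Finset.range m, p.coeff k * z ^ k) := by rw [hzn, map_neg_eq_map]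
      _ ≤ ∑ k ∈ Finset.range m, Complex.abs (p.coeff k * z ^ k) := Complex.abs.sum_le _ _
      _ ≤ ∑ k ∈ Finset.range m, Complex.abs (p.coeff k) * Complex.abs z ^ (m-1) := by
          refine Finset.sum_le_sum fun k hk => ?_
          rw [map_mul, map_pow]
          refine mul_le_mul_of_nonneg_left ?_ (AbsoluteValue.nonneg _ _)
          exact pow_le_pow_right₀ h1.le (Nat.le_sub_one_of_lt (Finset.mem_range.mp hk))
      _ = _ := by rw [← Finset.sum_mul]
  have hm1 : 1 ≤ m := by
    by_contra hm
    push_neg at hm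
    interval_cases m
    simp at hev
  have hzpos : (0:ℝ) < Complex.abs z := lt_trans one_pos h1
  have hpow : Complex.abs z ^ m = Complex.abs z ^ (m - 1) * Complex.abs z := by
    rw [← pow_succ]; congr 1; omega
  rw [hpow, mul_comm (∑ k ∈ Finset.range m, Complex.abs (p.coeff k)) _] at key
  exact le_of_mul_le_mul_left (by rwa [mul_comm (Complex.abs z ^ (m-1)) _, mul_comm (Complex.abs z ^ (m-1)) _] at key) (pow_pos hzpos _)

lemma lemB (hm : f.Monic) (hdeg : f.natDegree = n) {x₀ w : ℂ} (hw : (P f x₀).eval w = 0)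
    {ε : ℝ} (hε : 0 < ε) :
    ∃ V : Set ℂ, IsOpen V ∧ x₀ ∈ V ∧ ∀ x ∈ V, ∃ z ∈ (P f x).roots, dist z w < ε := by
  refine ⟨{x | Complex.abs ((P f x).eval w) < ε ^ n}, ?_, ?_, ?_⟩
  · exact isOpen_lt (Complex.continuous_abs.comp (continuous_P_eval hm hdeg w)) continuous_const
  · simp only [Set.mem_setOf_eq, hw, map_zero]
    exact pow_pos hε n
  · intro x hx
    by_contra hcon
    push_neg at hcon
    have : ε ^ n ≤ Complex.abs ((P f x).eval w) := by
      refine P_eval_lower hm hdeg hε fun a ha => ?_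
      have := hcon a ha
      rwa [Complex.dist_eq, AbsoluteValue.map_sub] at this
    exact absurd hx (by simp only [Set.mem_setOf_eq]; exact not_lt.mpr this)

lemma lemA (hm : f.Monic) (hdeg : f.natDegree = n) (x₀ : ℂ) {ε : ℝ} (hε : 0 < ε) :
    ∃ V : Set ℂ, IsOpen V ∧ x₀ ∈ V ∧
      ∀ x ∈ V, ∀ z ∈ (P f x).roots, ∃ w ∈ (P f x₀).roots, dist z w < ε := by
  classical
  set φ : ℂ → ℝ := fun x => ∑ k ∈ Finset.range n, Complex.abs ((f.coeff k).eval x) with hφ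
  have hφc : Continuous φ := continuous_finset_sum _ fun k _ =>
    Complex.continuous_abs.comp (f.coeff k).continuous_aeval
  obtain ⟨M, hM⟩ : BddAbove (φ '' Metric.closedBall x₀ 1) :=
    ((isCompact_closedBall x₀ 1).image hφc).bddAbove
  set R : ℝ := max 1 M with hR
  have hR1 : (1:ℝ) ≤ R := le_max_left _ _
  have hR0 : (0:ℝ) ≤ R := zero_le_one.trans hR1
  have hzR : ∀ x ∈ Metric.closedBall x₀ 1, ∀ z ∈ (P f x).roots, Complex.abs z ≤ R := by
    intro x hx z hz
    refine (root_bound' (P f x) (P_monic hm x) z ((mem_P_roots hm).mp hz)).trans ?_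
    have h1 : ∑ k ∈ Finset.range (P f x).natDegree, Complex.abs ((P f x).coeff k) = φ x := by
      rw [P_natDegree hm hdeg, hφ]
      exact Finset.sum_congr rfl fun k _ => by rw [P_coeff]
    rw [h1]
    exact max_le_max le_rfl (hM ⟨x, hx, rfl⟩)
  set ψ : ℂ → ℝ := fun x => ∑ k ∈ Finset.range (n+1),
      Complex.abs ((f.coeff k).eval x - (f.coeff k).eval x₀) * R ^ k with hψ
  have hψc : Continuous ψ := continuous_finset_sum _ fun k _ =>
    (Complex.continuous_abs.comp ((f.coeff k).continuous_aeval.sub continuous_const)).mul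
      continuous_const
  have hψ0 : ψ x₀ = 0 := by simp [hψ]
  refine ⟨Metric.ball x₀ 1 ∩ {x | ψ x < ε ^ n}, Metric.isOpen_ball.inter
    (isOpen_lt hψc continuous_const), ⟨Metric.mem_ball_self one_pos, ?_⟩, ?_⟩
  · simp only [Set.mem_setOf_eq, hψ0]
    exact pow_pos hε n
  · rintro x ⟨hx1, hx2⟩ z hz
    by_contra hcon
    push_neg at hcon
    have hlow : ε ^ n ≤ Complex.abs ((P f x₀).eval z) := by
      refine P_eval_lower hm hdeg hε fun a ha => ?_
      have := hcon a ha
      rwa [Complex.dist_eq] at this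
    have hz0 : (P f x).eval z = 0 := (mem_P_roots hm).mp hz
    have hdiff : (P f x₀).eval z = (P f x₀).eval z - (P f x).eval z := by rw [hz0, sub_zero]
    have hub : Complex.abs ((P f x₀).eval z - (P f x).eval z) ≤ ψ x := by
      rw [P_eval hm hdeg, P_eval hm hdeg, ← Finset.sum_sub_distrib]
      refine (Complex.abs.sum_le _ _).trans ?_
      refine Finset.sum_le_sum fun k _ => ?_
      rw [← sub_mul, map_mul, map_pow]
      rw [AbsoluteValue.map_sub]
      refine mul_le_mul_of_nonneg_left ?_ (AbsoluteValue.nonneg _ _)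
      exact pow_le_pow_left₀ (AbsoluteValue.nonneg _ _)
        (hzR x (Metric.ball_subset_closedBall hx1) z hz) k
    rw [hdiff] at hlow
    exact absurd hx2 (by simp only [Set.mem_setOf_eq]; exact not_lt.mpr (hlow.trans hub))

def goodSet (f : Polynomial (Polynomial ℂ)) (n : ℕ) : Set ℂ :=
  {x : ℂ | (f.map (evalRingHom x)).roots.toFinset.card = n}

lemma mem_goodSet {x : ℂ} : x ∈ goodSet f n ↔ (P f x).roots.toFinset.card = n := Iff.rfl

lemma range_eq (hm : f.Monic) (hdeg : f.natDegree = n) {x : ℂ} (hx : x ∈ goodSet f n)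
    (u : Fin n → ℂ) (hroot : ∀ i, (P f x).eval (u i) = 0) (hinj : Function.Injective u) :
    {c : ℂ | (P f x).eval c = 0} = Set.range u := by
  classical
  have h1 : Finset.image u Finset.univ ⊆ (P f x).roots.toFinset := by
    intro c hc
    obtain ⟨i, _, rfl⟩ := Finset.mem_image.mp hc
    exact Multiset.mem_toFinset.mpr ((mem_P_roots hm).mpr (hroot i))
  have h2 : Finset.image u Finset.univ = (P f x).roots.toFinset := by
    refine Finset.eq_of_subset_of_card_le h1 ?_
    rw [Finset.card_image_of_injective _ hinj, Finset.card_univ, Fintype.card_fin]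
    exact le_of_eq hx
  have h3 : {c : ℂ | (P f x).eval c = 0} = ((P f x).roots.toFinset : Set ℂ) := by
    ext c
    simp only [Set.mem_setOf_eq, Finset.coe_sort_coe, Multiset.mem_toFinset, Finset.mem_coe]
    exact (mem_P_roots hm).symm
  rw [h3, ← h2, Finset.coe_image, Finset.coe_univ, Set.image_univ]

lemma exists_perm {α : Type*} {m : ℕ} (u v : Fin m → α) (hu : Function.Injective u)
    (hv : Function.Injective v) (huv : Set.range u = Set.range v) :
    ∃ σ : Equiv.Perm (Fin m), ∀ i, v (σ i) = u i := by
  classical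
  have hex : ∀ i, ∃ j, v j = u i := fun i => by
    have : u i ∈ Set.range v := huv ▸ Set.mem_range_self i
    exact this
  choose g hg using hex
  have hginj : Function.Injective g := fun i j hij => hu (by rw [← hg i, ← hg j, hij])
  exact ⟨Equiv.ofBijective g (Finite.injective_iff_bijective.mp hginj), fun i => hg i⟩

lemma exists_sep {m : ℕ} (z : Fin m → ℂ) (hzinj : Function.Injective z) :
    ∃ ε > 0, ∀ i j : Fin m, i ≠ j → 4 * ε ≤ dist (z i) (z j) := by
  classical
  rcases (Finset.univ.filter fun p : Fin m × Fin m => p.1 ≠ p.2).eq_empty_or_nonempty with hemp | hne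
  · refine ⟨1, one_pos, fun i j hij => ?_⟩
    have : (i, j) ∈ Finset.univ.filter fun p : Fin m × Fin m => p.1 ≠ p.2 := by
      simp [hij]
    rw [hemp] at this
    exact absurd this (Finset.notMem_empty _)
  · obtain ⟨p, hp, hmin⟩ := Finset.exists_min_image _ (fun p : Fin m × Fin m => dist (z p.1) (z p.2)) hne
    have hpne : p.1 ≠ p.2 := by simpa using (Finset.mem_filter.mp hp).2
    have hdpos : 0 < dist (z p.1) (z p.2) := dist_pos.mpr fun hc => hpne (hzinj hc)
    refine ⟨dist (z p.1) (z p.2) / 4, by linarith, fun i j hij => ?_⟩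
    have := hmin (i, j) (by simp [hij])
    simp only at this
    linarith

lemma localLemma (hm : f.Monic) (hdeg : f.natDegree = n) {x₀ : ℂ} (hx₀ : x₀ ∈ goodSet f n) :
    ∃ V : Set ℂ, IsOpen V ∧ x₀ ∈ V ∧ ∃ g : Fin n → ℂ → ℂ,
      (∀ i, ContinuousOn (g i) (V ∩ goodSet f n)) ∧
      ∀ x ∈ V ∩ goodSet f n,
        (∀ i, (P f x).eval (g i x) = 0) ∧ (∀ i j, i ≠ j → g i x ≠ g j x) := by
  classical
  set e := Finset.equivFinOfCardEq (hx₀ : (P f x₀).roots.toFinset.card = n) with he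
  set z : Fin n → ℂ := fun i => ((e.symm i : (P f x₀).roots.toFinset) : ℂ) with hz
  have hzroot : ∀ i, z i ∈ (P f x₀).roots := fun i =>
    Multiset.mem_toFinset.mp (e.symm i).2
  have hzinj : Function.Injective z := fun i j hij => by
    have := Subtype.ext (p := fun c => c ∈ (P f x₀).roots.toFinset) hij
    exact e.symm.injective this
  have hall : ∀ w ∈ (P f x₀).roots, ∃ i, z i = w := by
    intro w hw
    refine ⟨e ⟨w, Multiset.mem_toFinset.mpr hw⟩, ?_⟩
    simp [hz]
  obtain ⟨ε, hε, hsep⟩ := exists_sep z hzinj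
  obtain ⟨VA, hVAo, hVAx, hVA⟩ := lemA hm hdeg x₀ hε
  have hVA' : ∀ x ∈ VA, ∀ r ∈ (P f x).roots, ∃ i, dist r (z i) < ε := by
    intro x hx r hr
    obtain ⟨w, hw, hdw⟩ := hVA x hx r hr
    obtain ⟨i, rfl⟩ := hall w hw
    exact ⟨i, hdw⟩
  have hVB : ∀ i : Fin n, ∃ V : Set ℂ, IsOpen V ∧ x₀ ∈ V ∧
      ∀ x ∈ V, ∃ r ∈ (P f x).roots, dist r (z i) < ε :=
    fun i => lemB hm hdeg ((mem_P_roots hm).mp (hzroot i)) hε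
  choose VB hVBo hVBx hVBs using hVB
  set V : Set ℂ := VA ∩ ⋂ i, VB i with hV
  have hVo : IsOpen V := hVAo.inter (isOpen_iInter_of_finite hVBo)
  have hVx : x₀ ∈ V := ⟨hVAx, Set.mem_iInter.mpr hVBx⟩
  set g : Fin n → ℂ → ℂ := fun i x =>
    if hx : ∃ r ∈ (P f x).roots, dist r (z i) < ε then hx.choose else 0 with hgdef
  have hg : ∀ x ∈ V, ∀ i, g i x ∈ (P f x).roots ∧ dist (g i x) (z i) < ε := by
    intro x hx i
    have hex : ∃ r ∈ (P f x).roots, dist r (z i) < ε :=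
      hVBs i x (Set.mem_iInter.mp hx.2 i)
    simp only [hgdef, dif_pos hex]
    exact hex.choose_spec
  have hgroot : ∀ x ∈ V, ∀ i, (P f x).eval (g i x) = 0 := fun x hx i =>
    (mem_P_roots hm).mp (hg x hx i).1
  have hgne : ∀ x ∈ V, ∀ i j, i ≠ j → g i x ≠ g j x := by
    intro x hx i j hij heq
    have h1 := (hg x hx i).2
    have h2 := (hg x hx j).2
    have h3 := hsep i j hij
    have h4 : dist (z i) (z j) ≤ dist (z i) (g i x) + dist (g i x) (z j) := dist_triangle _ _ _
    rw [dist_comm (z i) (g i x), heq] at h4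
    have h5 : dist (g j x) (z i) < ε := heq ▸ h1
    linarith
  have huniq : ∀ x ∈ V ∩ goodSet f n, ∀ i, ∀ r ∈ (P f x).roots, dist r (z i) < ε → r = g i x := by
    intro x hx i r hr hdr
    have hinj : Function.Injective fun i => g i x := by
      intro a b hab
      by_contra hne
      exact hgne x hx.1 a b hne hab
    have hrange := range_eq hm hdeg hx.2 (fun i => g i x) (hgroot x hx.1) hinj
    have hmem : r ∈ {c : ℂ | (P f x).eval c = 0} := (mem_P_roots hm).mp hr
    rw [hrange] at hmem
    obtain ⟨j, hj⟩ := hmem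
    simp only at hj
    by_cases hji : j = i
    · rw [← hj, hji]
    · exfalso
      have h1 : dist (g j x) (z j) < ε := (hg x hx.1 j).2
      have h4 : dist r (z j) < ε := hj ▸ h1
      have h2 : dist (z i) (z j) ≤ dist (z i) r + dist r (z j) := dist_triangle _ _ _
      have h3 := hsep i j (Ne.symm hji)
      have h5 : dist (z i) r = dist r (z i) := dist_comm _ _
      linarith
  have hcont : ∀ i, ContinuousOn (g i) (V ∩ goodSet f n) := by
    intro i
    rw [Metric.continuousOn_iff]
    intro x' hx' η hη
    have hη' : 0 < min η ε := lt_min hη hε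
    obtain ⟨W, hWo, hWx, hW⟩ := lemA hm hdeg x' hη'
    obtain ⟨δ, hδ, hball⟩ := Metric.isOpen_iff.mp hWo x' hWx
    refine ⟨δ, hδ, ?_⟩
    intro x hx hdx
    obtain ⟨r, hr, hdr⟩ := hW x (hball hdx) (g i x) (hg x hx.1 i).1
    have hrz : dist r (z i) < ε := by
      obtain ⟨j, hj⟩ := hVA' x' hx'.1.1 r hr
      by_cases hji : j = i
      · rwa [hji] at hj
      · exfalso
        have h1 : dist r (z i) ≤ dist r (g i x) + dist (g i x) (z i) := dist_triangle _ _ _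
        have h2 : dist r (g i x) = dist (g i x) r := dist_comm _ _
        have h3 : dist (z i) (z j) ≤ dist (z i) r + dist r (z j) := dist_triangle _ _ _
        have h4 := hsep i j (Ne.symm hji)
        have h5 : dist (z i) r = dist r (z i) := dist_comm _ _
        have h6 := (hg x hx.1 i).2
        have h7 : min η ε ≤ ε := min_le_right _ _
        linarith
    have hru := huniq x' hx' i r hr hrz
    rw [← hru]
    exact hdr.trans_le (min_le_left _ _)
  exact ⟨V, hVo, hVx, g, hcont, fun x hx => ⟨hgroot x hx.1, hgne x hx.1⟩⟩

lemma inj_of_pairwise {α β : Type*} {u : α → β} (h : ∀ i j, i ≠ j → u i ≠ u j) :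
    Function.Injective u := fun a b hab => of_not_not fun hne => (h a b hne) hab

end Stmt9

open Stmt9 in
/-- For `f ∈ (ℂ[X])[Y]` monic of degree `n ≥ 1` in `Y`, and a continuous
path `h` in the complement of `N = {x : f_x has fewer than n distinct roots}`, the `n`
roots of `f_{h(t)}` can be followed continuously and without collision along the path;
at every time `t` they exhaust the root set of `f_{h(t)}`. -/
theorem stmt9 (f : Polynomial (Polynomial ℂ)) (n : ℕ) (hn : 1 ≤ n)
    (hmonic : f.Monic) (hdeg : f.natDegree = n)
    (h : unitInterval → ℂ) (hcont : Continuous h)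
    (hN : ∀ t : unitInterval, ¬ ((f.map (evalRingHom (h t))).roots.toFinset.card < n)) :
    ∃ y : Fin n → unitInterval → ℂ,
      (∀ i, Continuous (y i)) ∧
      (∀ (t : unitInterval) (i : Fin n), (f.map (evalRingHom (h t))).eval (y i t) = 0) ∧
      (∀ (t : unitInterval) (i j : Fin n), i ≠ j → y i t ≠ y j t) ∧
      (∀ t : unitInterval,
        {c : ℂ | (f.map (evalRingHom (h t))).eval c = 0} = Set.range fun i => y i t) := by
  classical
  have hS : ∀ t : unitInterval, h t ∈ goodSet f n := by
    intro t
    have h2 : (P f (h t)).roots.toFinset.card ≤ n := by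
      refine le_trans (Multiset.toFinset_card_le _) ?_
      rw [P_roots_card hmonic hdeg]
    exact le_antisymm h2 (not_lt.mp (hN t))
  choose V hVo hVx g hgc hgp using fun t : unitInterval => localLemma hmonic hdeg (hS t)
  have hc1 : ∀ t : unitInterval, IsOpen ((h ⁻¹' (V t)) : Set unitInterval) :=
    fun t => (hVo t).preimage hcont
  have hc2 : (Set.univ : Set unitInterval) ⊆ ⋃ t, h ⁻¹' (V t) :=
    fun s _ => Set.mem_iUnion.mpr ⟨s, hVx s⟩
  obtain ⟨τ, hτ0, hτmono, ⟨m, hτm⟩, hτsub⟩ :=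
    exists_monotone_Icc_subset_open_cover_unitInterval hc1 hc2
  have key : ∀ k : ℕ, ∃ Y : Fin n → unitInterval → ℂ,
      (∀ i, Continuous (Y i)) ∧
      ∀ s : unitInterval, s ≤ τ k →
        (∀ i, (P f (h s)).eval (Y i s) = 0) ∧ (∀ i j, i ≠ j → Y i s ≠ Y j s) := by
    intro k
    induction k with
    | zero =>
      set e := Finset.equivFinOfCardEq
        (hS (τ 0) : ((P f (h (τ 0))).roots.toFinset.card = n)) with he
      refine ⟨fun i _ => ((e.symm i : (P f (h (τ 0))).roots.toFinset) : ℂ),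
        fun i => continuous_const, ?_⟩
      intro s hs
      have hs0 : s = τ 0 := le_antisymm hs (by rw [hτ0]; exact unitInterval.nonneg' )
      subst hs0
      constructor
      · exact fun i => (mem_P_roots hmonic).mp (Multiset.mem_toFinset.mp (e.symm i).2)
      · exact fun i j hij hc => hij (e.symm.injective (Subtype.ext hc))
    | succ k ih =>
      obtain ⟨Y, hYc, hYp⟩ := ih
      obtain ⟨t, ht⟩ := hτsub k
      have hkk : τ k ≤ τ (k+1) := hτmono (Nat.le_succ k)
      set ρ : unitInterval → unitInterval := fun s =>
        Set.projIcc (0:ℝ) 1 zero_le_one (max ((τ k : ℝ)) (min ((τ (k+1) : ℝ)) (s : ℝ))) with hρ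
      have hρc : Continuous ρ := continuous_projIcc.comp
        (continuous_const.max (continuous_const.min continuous_subtype_val))
      have hρval : ∀ s, (ρ s : ℝ) = max ((τ k : ℝ)) (min ((τ (k+1) : ℝ)) (s : ℝ)) := by
        intro s
        have hmem : max ((τ k : ℝ)) (min ((τ (k+1) : ℝ)) (s : ℝ)) ∈ Set.Icc (0:ℝ) 1 :=
          ⟨le_trans (τ k).2.1 (le_max_left _ _),
           max_le (τ k).2.2 (le_trans (min_le_left _ _) (τ (k+1)).2.2)⟩
        rw [hρ]
        simp only [Set.projIcc_of_mem zero_le_one hmem]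
      have hρIcc : ∀ s, ρ s ∈ Set.Icc (τ k) (τ (k+1)) := by
        intro s
        constructor
        · rw [← Subtype.coe_le_coe, hρval]
          exact le_max_left _ _
        · rw [← Subtype.coe_le_coe, hρval]
          exact max_le (Subtype.coe_le_coe.mpr hkk) (min_le_left _ _)
      have hρeq : ∀ s, τ k ≤ s → s ≤ τ (k+1) → ρ s = s := by
        intro s h1 h2
        apply Subtype.ext
        rw [hρval, min_eq_right (Subtype.coe_le_coe.mpr h2), max_eq_right (Subtype.coe_le_coe.mpr h1)]
      have hmemVS : ∀ s : unitInterval, h (ρ s) ∈ V t ∩ goodSet f n :=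
        fun s => ⟨ht (hρIcc s), hS (ρ s)⟩
      set Y' : Fin n → unitInterval → ℂ := fun i s => g t i (h (ρ s)) with hY'
      have hY'c : ∀ i, Continuous (Y' i) := fun i =>
        (hgc t i).comp_continuous (hcont.comp hρc) hmemVS
      have hY'p : ∀ s : unitInterval, τ k ≤ s → s ≤ τ (k+1) →
          (∀ i, (P f (h s)).eval (Y' i s) = 0) ∧ (∀ i j, i ≠ j → Y' i s ≠ Y' j s) := by
        intro s h1 h2
        have hps := hgp t (h s) (by rw [← hρeq s h1 h2]; exact hmemVS s)
        constructor
        · intro i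
          have := hps.1 i
          simpa [hY', hρeq s h1 h2] using this
        · intro i j hij
          have := hps.2 i j hij
          simpa [hY', hρeq s h1 h2] using this
      have hjunc1 := hYp (τ k) le_rfl
      have hjunc2 := hY'p (τ k) le_rfl hkk
      have hu : Function.Injective fun i => Y i (τ k) := inj_of_pairwise hjunc1.2
      have hv : Function.Injective fun i => Y' i (τ k) := inj_of_pairwise hjunc2.2
      have hranges : Set.range (fun i => Y i (τ k)) = Set.range (fun i => Y' i (τ k)) := by
        rw [← range_eq hmonic hdeg (hS (τ k)) _ hjunc1.1 hu,
            ← range_eq hmonic hdeg (hS (τ k)) _ hjunc2.1 hv]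
      obtain ⟨σ, hσ⟩ := exists_perm _ _ hu hv hranges
      refine ⟨fun i s => if (s:ℝ) ≤ (τ k : ℝ) then Y i s else Y' (σ i) s, ?_, ?_⟩
      · intro i
        refine Continuous.if_le (hYc i) (hY'c (σ i)) continuous_subtype_val continuous_const ?_
        intro s hs
        have hsk : s = τ k := Subtype.ext hs
        rw [hsk]
        exact (hσ i).symm
      · intro s hs
        by_cases hsk : (s:ℝ) ≤ (τ k : ℝ)
        · have hsk' : s ≤ τ k := Subtype.coe_le_coe.mp hsk
          constructor
          · intro i
            simp only [if_pos hsk]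
            exact (hYp s hsk').1 i
          · intro i j hij
            simp only [if_pos hsk]
            exact (hYp s hsk').2 i j hij
        · push_neg at hsk
          have h1 : τ k ≤ s := le_of_lt (Subtype.coe_lt_coe.mp hsk)
          have props := hY'p s h1 hs
          constructor
          · intro i
            simp only [if_neg (not_le.mpr hsk)]
            exact props.1 (σ i)
          · intro i j hij
            simp only [if_neg (not_le.mpr hsk)]
            exact props.2 (σ i) (σ j) fun hc => hij (σ.injective hc)
  obtain ⟨Y, hYc, hYp⟩ := key m
  have hall : ∀ s : unitInterval, s ≤ τ m := by
    intro s
    rw [hτm m le_rfl]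
    exact unitInterval.le_one'
  refine ⟨Y, hYc, fun s i => (hYp s (hall s)).1 i, fun s i j hij => (hYp s (hall s)).2 i j hij, ?_⟩
  intro s
  exact range_eq hmonic hdeg (hS s) (fun i => Y i s) (fun i => (hYp s (hall s)).1 i)
    (inj_of_pairwise (hYp s (hall s)).2)
end
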